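/- Decomposition: every synchronisation σ (for fixed injective relations g : A → Y → Prop and h : B → Y → Prop) is the union of the paths contained in it: σ = ⋃ {γ | γ is a path and γ ⊆ σ}. -/

import Mathlib

/-- A relation `R : A → Z → Prop` is injective if `R a z` and `R a' z` imply `a = a'`. -/
def IsInjRel {A Z : Type*} (R : A → Z → Prop) : Prop :=
  ∀ ⦃a a' : A⦄ ⦃z : Z⦄, R a z → R a' z → a = a'

/-- Image of a set under a relation. -/
def RelImage {A Z : Type*} (R : A → Z → Prop) (α : Set A) : Set Z :=
  {z | ∃ a ∈ α, R a z}

/-- Composite of relations: `(R ; S) a c ↔ ∃ b, R a b ∧ S b c`. -/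
def RelComp {A B C : Type*} (R : A → B → Prop) (S : B → C → Prop) : A → C → Prop :=
  fun a c => ∃ b, R a b ∧ S b c

/-- `σ ⊆ A ⊕ B` is a synchronisation when `g(σ_A) = h(σ_B)`. -/
def IsSync {A B Y : Type*} (g : A → Y → Prop) (h : B → Y → Prop)
    (σ : Set (A ⊕ B)) : Prop :=
  RelImage g {a | Sum.inl a ∈ σ} = RelImage h {b | Sum.inr b ∈ σ}

/-- A path is a minimal non-empty synchronisation. -/
def IsPath {A B Y : Type*} (g : A → Y → Prop) (h : B → Y → Prop)
    (γ : Set (A ⊕ B)) : Prop :=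
  IsSync g h γ ∧ γ.Nonempty ∧
    ∀ τ ⊆ γ, IsSync g h τ → τ.Nonempty → τ = γ

/-- Decomposition: every synchronisation is the union of the paths contained in it. -/
theorem sync_eq_sUnion_paths {A B Y : Type*} (g : A → Y → Prop) (h : B → Y → Prop)
    (hg : IsInjRel g) (hh : IsInjRel h)
    (σ : Set (A ⊕ B)) (hσ : IsSync g h σ) :
    σ = ⋃₀ {γ | IsPath g h γ ∧ γ ⊆ σ} := by
  classical
  -- step relation restricted to σ
  set S : (A ⊕ B) → (A ⊕ B) → Prop := fun u v => u ∈ σ ∧ v ∈ σ ∧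
    ∃ a b y, ((u = Sum.inl a ∧ v = Sum.inr b) ∨ (u = Sum.inr b ∧ v = Sum.inl a)) ∧
      g a y ∧ h b y with hSdef
  have hSsymm : Symmetric S := by
    rintro u v ⟨hu, hv, a, b, y, hab, hgy, hhy⟩
    exact ⟨hv, hu, a, b, y, hab.symm.imp And.symm And.symm, hgy, hhy⟩
  ext x
  simp only [Set.mem_sUnion, Set.mem_setOf_eq]
  constructor
  · intro hx
    set γ : Set (A ⊕ B) := {v | v ∈ σ ∧ Relation.ReflTransGen S x v} with hγdef
    have hγσ : γ ⊆ σ := fun v hv => hv.1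
    have hγsync : IsSync g h γ := by
      apply Set.eq_of_subset_of_subset
      · rintro y ⟨a, ⟨haσ, hxa⟩, hay⟩
        have : y ∈ RelImage h {b | Sum.inr b ∈ σ} := by
          rw [← hσ]; exact ⟨a, haσ, hay⟩
        obtain ⟨b, hbσ, hby⟩ := this
        exact ⟨b, ⟨hbσ, hxa.tail ⟨haσ, hbσ, a, b, y, Or.inl ⟨rfl, rfl⟩, hay, hby⟩⟩, hby⟩
      · rintro y ⟨b, ⟨hbσ, hxb⟩, hby⟩
        have : y ∈ RelImage g {a | Sum.inl a ∈ σ} := by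
          rw [hσ]; exact ⟨b, hbσ, hby⟩
        obtain ⟨a, haσ, hay⟩ := this
        exact ⟨a, ⟨haσ, hxb.tail ⟨hbσ, haσ, a, b, y, Or.inr ⟨rfl, rfl⟩, hay, hby⟩⟩, hay⟩
    have hxγ : x ∈ γ := ⟨hx, Relation.ReflTransGen.refl⟩
    refine ⟨γ, ⟨⟨hγsync, ⟨x, hxγ⟩, ?_⟩, hγσ⟩, hxγ⟩
    -- minimality
    intro τ hτγ hτsync hτne
    apply Set.eq_of_subset_of_subset hτγ
    obtain ⟨u, huτ⟩ := hτne
    -- τ is closed under S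
    have hclosed : ∀ w w', w ∈ τ → S w w' → w' ∈ τ := by
      rintro w w' hwτ ⟨-, -, a, b, y, hab, hgy, hhy⟩
      rcases hab with ⟨rfl, rfl⟩ | ⟨rfl, rfl⟩
      · have : y ∈ RelImage h {b | Sum.inr b ∈ τ} := by
          rw [← hτsync]; exact ⟨a, hwτ, hgy⟩
        obtain ⟨b', hb'τ, hb'y⟩ := this
        rwa [hh hhy hb'y]
      · have : y ∈ RelImage g {a | Sum.inl a ∈ τ} := by
          rw [hτsync]; exact ⟨b, hwτ, hhy⟩
        obtain ⟨a', ha'τ, ha'y⟩ := this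
        rwa [hg hgy ha'y]
    intro v hvγ
    have hux : Relation.ReflTransGen S u x :=
      by haveI : Std.Symm S := ⟨fun _ _ h => hSsymm h⟩; exact Std.Symm.symm _ _ (hτγ huτ).2
    have huv : Relation.ReflTransGen S u v := hux.trans hvγ.2
    clear hvγ
    induction huv with
    | refl => exact huτ
    | tail _ hstep ih => exact hclosed _ _ ih hstep
  · rintro ⟨γ, ⟨-, hγσ⟩, hxγ⟩
    exact hγσ hxγ
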